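/- With the setup of the randomized Kaczmarz step with mismatched adjoint, if λ := λ_min(VᵀDA + AᵀDV − AᵀSDA) > 0, then E(‖x⁺ − x̂‖²) ≤ (1 − λ)·‖x − x̂‖². -/

import Mathlib

open Matrix Finset

noncomputable def enorm' {n : ℕ} (v : Fin n → ℝ) : ℝ := Real.sqrt (v ⬝ᵥ v)

lemma dotSelf_nonneg {n : ℕ} (v : Fin n → ℝ) : 0 ≤ v ⬝ᵥ v :=
  Finset.sum_nonneg fun i _ => mul_self_nonneg _

lemma enorm'_sq {n : ℕ} (v : Fin n → ℝ) : (enorm' v) ^ 2 = v ⬝ᵥ v := by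
  rw [enorm', Real.sq_sqrt (dotSelf_nonneg v)]

lemma expand_sub' {n : ℕ} (u v : Fin n → ℝ) (c : ℝ) :
    (u - c • v) ⬝ᵥ (u - c • v) = u ⬝ᵥ u - 2 * c * (v ⬝ᵥ u) + c ^ 2 * (v ⬝ᵥ v) := by
  simp only [dotProduct_sub, sub_dotProduct, smul_dotProduct,
    dotProduct_smul, smul_eq_mul, dotProduct_comm v u]
  ring

lemma rayleigh_lower {k : ℕ} {M : Matrix (Fin k) (Fin k) ℝ} (hM : M.IsHermitian) (lam : ℝ)
    (hle : ∀ j, lam ≤ hM.eigenvalues j) (e : Fin k → ℝ) :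
    lam * (e ⬝ᵥ e) ≤ e ⬝ᵥ M *ᵥ e := by
  set U := (hM.eigenvectorUnitary : Matrix (Fin k) (Fin k) ℝ) with hUdef
  have hUU : U * star U = 1 := Matrix.mem_unitaryGroup_iff.mp hM.eigenvectorUnitary.2
  have hstar : star U = Uᵀ := rfl
  set y := Uᵀ *ᵥ e with hy
  have hyz : ∀ z : Fin k → ℝ, e ⬝ᵥ (U *ᵥ z) = y ⬝ᵥ z := by
    intro z
    rw [Matrix.dotProduct_mulVec, hy, ← Matrix.vecMul_transpose, Matrix.transpose_transpose]
  have hUy : U *ᵥ y = e := by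
    rw [hy, Matrix.mulVec_mulVec, ← hstar, hUU, Matrix.one_mulVec]
  have hee : e ⬝ᵥ e = y ⬝ᵥ y := by
    calc e ⬝ᵥ e = e ⬝ᵥ (U *ᵥ y) := by rw [hUy]
      _ = y ⬝ᵥ y := hyz y
  have hspec := hM.spectral_theorem
  have hQ : e ⬝ᵥ M *ᵥ e = ∑ j, hM.eigenvalues j * (y j) ^ 2 := by
    conv_lhs => rw [hspec, Unitary.conjStarAlgAut_apply, ← hUdef]
    rw [hstar] at *
    rw [← Matrix.mulVec_mulVec, ← Matrix.mulVec_mulVec, hyz, ← hy]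
    rw [dotProduct]
    refine Finset.sum_congr rfl fun j _ => ?_
    rw [Matrix.mulVec_diagonal]
    simp [Function.comp]
    ring
  rw [hQ, hee, dotProduct, Finset.mul_sum]
  refine Finset.sum_le_sum fun j _ => ?_
  have : lam * y j ^ 2 ≤ hM.eigenvalues j * y j ^ 2 :=
    mul_le_mul_of_nonneg_right (hle j) (sq_nonneg _)
  calc lam * (y j * y j) = lam * y j ^ 2 := by ring
    _ ≤ hM.eigenvalues j * y j ^ 2 := this

theorem expected_squared_error_contraction {m n : ℕ} (A V : Matrix (Fin m) (Fin n) ℝ)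
    (p : Fin m → ℝ) (hp : ∀ i, 0 < p i) (hps : ∑ i, p i = 1)
    (hav : ∀ i, 0 < A i ⬝ᵥ V i)
    (b : Fin m → ℝ) (xhat : Fin n → ℝ) (hb : A.mulVec xhat = b)
    (x : Fin n → ℝ)
    (D S : Matrix (Fin m) (Fin m) ℝ)
    (hD : D = Matrix.diagonal (fun i => p i / (A i ⬝ᵥ V i)))
    (hS : S = Matrix.diagonal (fun i => (enorm' (V i)) ^ 2 / (A i ⬝ᵥ V i)))
    (hM : (Vᵀ * D * A + Aᵀ * D * V - Aᵀ * S * D * A).IsHermitian)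
    (lam : ℝ) (hlam : lam = ⨅ j, hM.eigenvalues j) (hlampos : 0 < lam) :
    ∑ i, p i * (enorm' (x - ((A i ⬝ᵥ x - b i) / (A i ⬝ᵥ V i)) • V i - xhat)) ^ 2
      ≤ (1 - lam) * (enorm' (x - xhat)) ^ 2 := by
  set e : Fin n → ℝ := x - xhat with he
  set M : Matrix (Fin n) (Fin n) ℝ := Vᵀ * D * A + Aᵀ * D * V - Aᵀ * S * D * A with hMdef
  have hle : ∀ j, lam ≤ hM.eigenvalues j := fun j => by
    rw [hlam]; exact ciInf_le (Finite.bddBelow_range _) j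
  have hray := rayleigh_lower hM lam hle e
  -- notation
  set q : Fin m → ℝ := fun i => A i ⬝ᵥ e with hq
  set r : Fin m → ℝ := fun i => V i ⬝ᵥ e with hr
  have hbq : ∀ i, A i ⬝ᵥ x - b i = q i := by
    intro i
    rw [← hb]
    simp [hq, he, Matrix.mulVec, dotProduct, Pi.sub_apply, mul_sub,
      Finset.sum_sub_distrib]
  -- quadratic form computation
  have hQform : e ⬝ᵥ M *ᵥ e
      = ∑ i, (p i / (A i ⬝ᵥ V i)) *
          (2 * q i * r i - q i ^ 2 * (V i ⬝ᵥ V i) / (A i ⬝ᵥ V i)) := by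
    have hAe : A *ᵥ e = q := rfl
    have hVe : V *ᵥ e = r := rfl
    have t1 : e ⬝ᵥ (Vᵀ * D * A) *ᵥ e
        = ∑ i, r i * (p i / (A i ⬝ᵥ V i) * q i) := by
      rw [← Matrix.mulVec_mulVec, ← Matrix.mulVec_mulVec, Matrix.dotProduct_mulVec,
        Matrix.vecMul_transpose, hAe, hVe, hD]
      refine Finset.sum_congr rfl fun i _ => ?_
      rw [Matrix.mulVec_diagonal]
    have t2 : e ⬝ᵥ (Aᵀ * D * V) *ᵥ e
        = ∑ i, q i * (p i / (A i ⬝ᵥ V i) * r i) := by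
      rw [← Matrix.mulVec_mulVec, ← Matrix.mulVec_mulVec, Matrix.dotProduct_mulVec,
        Matrix.vecMul_transpose, hAe, hVe, hD]
      refine Finset.sum_congr rfl fun i _ => ?_
      rw [Matrix.mulVec_diagonal]
    have t3 : e ⬝ᵥ (Aᵀ * S * D * A) *ᵥ e
        = ∑ i, q i * ((V i ⬝ᵥ V i) / (A i ⬝ᵥ V i) * (p i / (A i ⬝ᵥ V i) * q i)) := by
      rw [← Matrix.mulVec_mulVec, ← Matrix.mulVec_mulVec, ← Matrix.mulVec_mulVec,
        Matrix.dotProduct_mulVec, Matrix.vecMul_transpose, hAe, hD, hS]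
      refine Finset.sum_congr rfl fun i _ => ?_
      rw [Matrix.mulVec_diagonal, Matrix.mulVec_diagonal, enorm'_sq]
    rw [hMdef, Matrix.sub_mulVec, Matrix.add_mulVec, dotProduct_sub,
      dotProduct_add, t1, t2, t3, ← Finset.sum_add_distrib, ← Finset.sum_sub_distrib]
    refine Finset.sum_congr rfl fun i _ => ?_
    have hne : (A i ⬝ᵥ V i) ≠ 0 := (hav i).ne'
    field_simp
    ring
  -- per-row expansion
  have hrow : ∀ i, p i * (enorm' (x - ((A i ⬝ᵥ x - b i) / (A i ⬝ᵥ V i)) • V i - xhat)) ^ 2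
      = p i * (e ⬝ᵥ e)
        - (p i / (A i ⬝ᵥ V i)) *
            (2 * q i * r i - q i ^ 2 * (V i ⬝ᵥ V i) / (A i ⬝ᵥ V i)) := by
    intro i
    have hvec : x - ((A i ⬝ᵥ x - b i) / (A i ⬝ᵥ V i)) • V i - xhat
        = e - (q i / (A i ⬝ᵥ V i)) • V i := by
      rw [hbq i, he, sub_right_comm]
    rw [hvec, enorm'_sq, expand_sub' e (V i) (q i / (A i ⬝ᵥ V i))]
    have hri : V i ⬝ᵥ e = r i := rfl
    rw [hri]
    have hne : (A i ⬝ᵥ V i) ≠ 0 := (hav i).ne'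
    field_simp
    ring
  calc ∑ i, p i * (enorm' (x - ((A i ⬝ᵥ x - b i) / (A i ⬝ᵥ V i)) • V i - xhat)) ^ 2
      = ∑ i, (p i * (e ⬝ᵥ e)
        - (p i / (A i ⬝ᵥ V i)) *
            (2 * q i * r i - q i ^ 2 * (V i ⬝ᵥ V i) / (A i ⬝ᵥ V i))) :=
        Finset.sum_congr rfl fun i _ => hrow i
    _ = (e ⬝ᵥ e) - e ⬝ᵥ M *ᵥ e := by
        rw [Finset.sum_sub_distrib, ← Finset.sum_mul, hps, one_mul, hQform]
    _ ≤ (e ⬝ᵥ e) - lam * (e ⬝ᵥ e) := by linarith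
    _ = (1 - lam) * (enorm' (x - xhat)) ^ 2 := by rw [enorm'_sq, ← he]; ring
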